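/- Let G = A_m be the alternating group with m ≥ 5. The proportion of elements of A_m having at most two cycles (in their decomposition into disjoint cycles on m points, including fixed points as cycles) is at most 2(1 + log m)/m. -/

import Mathlib

open Finset Equiv
open scoped Nat

section Aux

variable {α : Type*} [Fintype α] [DecidableEq α]

/-- Lower bound on the centralizer of a permutation with at most two cycles. -/
lemma aux_cent_card_ge (σ : Equiv.Perm α) (h2 : Multiset.card σ.cycleType ≤ 2) :
    σ.cycleType.prod ≤ (univ.filter (fun g : Equiv.Perm α => g * σ = σ * g)).card := by
  classical
  set C := univ.filter (fun g : Equiv.Perm α => g * σ = σ * g) with hC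
  by_cases h0 : Multiset.card σ.cycleType = 0
  · have hσ1 : σ = 1 := Equiv.Perm.card_cycleType_eq_zero.mp h0
    subst hσ1
    have h1 : (1 : Equiv.Perm α) ∈ C := by
      simp [hC, Commute.one_left]
    simpa [Equiv.Perm.cycleType_one] using Finset.card_pos.mpr ⟨1, h1⟩
  by_cases h1 : Multiset.card σ.cycleType = 1
  · have hc : σ.IsCycle := Equiv.Perm.card_cycleType_eq_one.mp h1
    have hprod : σ.cycleType.prod = σ.support.card := by
      rw [hc.cycleType]; simp
    have hord : orderOf σ = σ.support.card := hc.orderOf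
    rw [hprod, ← hord]
    have hsub : (Finset.range (orderOf σ)).image (σ ^ ·) ⊆ C := by
      intro g hg
      simp only [Finset.mem_image, Finset.mem_range] at hg
      obtain ⟨k, _, rfl⟩ := hg
      simp only [hC, Finset.mem_filter, Finset.mem_univ, true_and]
      exact ((Commute.refl σ).pow_left k).eq
    calc orderOf σ = ((Finset.range (orderOf σ)).image (σ ^ ·)).card := by
          rw [Finset.card_image_of_injOn, Finset.card_range]
          intro a ha b hb hab
          exact pow_injOn_Iio_orderOf (by simpa using ha) (by simpa using hb) hab
      _ ≤ C.card := Finset.card_le_card hsub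
  -- two cycles
  have h2c : Multiset.card σ.cycleType = 2 := by omega
  have hfc : σ.cycleFactorsFinset.card = 2 := by
    rw [Equiv.Perm.cycleType_def] at h2c
    simpa using h2c
  obtain ⟨c, d, hcd, hset⟩ := Finset.card_eq_two.mp hfc
  have hcmem : c ∈ σ.cycleFactorsFinset := by rw [hset]; simp
  have hdmem : d ∈ σ.cycleFactorsFinset := by rw [hset]; simp
  have hcc : c.IsCycle := (Equiv.Perm.mem_cycleFactorsFinset_iff.mp hcmem).1
  have hdc : d.IsCycle := (Equiv.Perm.mem_cycleFactorsFinset_iff.mp hdmem).1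
  have hdisj : Equiv.Perm.Disjoint c d :=
    (Equiv.Perm.cycleFactorsFinset_pairwise_disjoint σ)
      (Finset.mem_coe.mpr hcmem) (Finset.mem_coe.mpr hdmem) hcd
  set n₁ := c.support.card with hn₁
  set n₂ := d.support.card with hn₂
  have hprod : σ.cycleType.prod = n₁ * n₂ := by
    rw [Equiv.Perm.cycleType_def, hset]
    rw [Finset.insert_val, Multiset.ndinsert_of_notMem (by simpa using hcd)]
    simp
    rfl
  have hordc : orderOf c = n₁ := hcc.orderOf
  have hordd : orderOf d = n₂ := hdc.orderOf
  have hinj : Set.InjOn (fun p : ℕ × ℕ => c ^ p.1 * d ^ p.2)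
      ↑(Finset.range n₁ ×ˢ Finset.range n₂) := by
    rintro ⟨a, b⟩ hab ⟨a', b'⟩ hab' hfeq
    simp only [Finset.coe_product, Set.mem_prod, Finset.mem_coe, Finset.mem_range] at hab hab'
    have h' : c ^ (a : ℤ) * d ^ (b : ℤ) = c ^ (a' : ℤ) * d ^ (b' : ℤ) := by
      simpa [zpow_natCast] using hfeq
    have e1 : c ^ ((a : ℤ) - a') = (c ^ (a' : ℤ))⁻¹ * c ^ (a : ℤ) := by
      rw [sub_eq_neg_add, zpow_add, zpow_neg]
    have e2 : d ^ ((b' : ℤ) - b) = d ^ (b' : ℤ) * (d ^ (b : ℤ))⁻¹ := by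
      rw [sub_eq_add_neg, zpow_add, zpow_neg]
    have hkey : c ^ ((a : ℤ) - a') = d ^ ((b' : ℤ) - b) := by
      rw [e1, e2, inv_mul_eq_iff_eq_mul, ← mul_assoc, ← h', mul_assoc]
      simp
    have hzero : c ^ ((a : ℤ) - a') = 1 := by
      rw [← Equiv.Perm.support_eq_empty_iff]
      have hd' := Equiv.Perm.disjoint_iff_disjoint_support.mp hdisj
      have hle : (c ^ ((a : ℤ) - a')).support ≤ c.support ⊓ d.support :=
        le_inf (Equiv.Perm.support_zpow_le c _)
          (hkey ▸ Equiv.Perm.support_zpow_le d _)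
      have : c.support ⊓ d.support = ∅ := by
        rwa [Finset.disjoint_iff_inter_eq_empty, ← Finset.inf_eq_inter] at hd'
      exact Finset.subset_empty.mp (this ▸ hle)
    have hzero' : d ^ ((b' : ℤ) - b) = 1 := hkey ▸ hzero
    have hdvd1 : ((n₁ : ℕ) : ℤ) ∣ (a : ℤ) - a' := by
      rw [← hordc]; exact orderOf_dvd_iff_zpow_eq_one.mpr hzero
    have hdvd2 : ((n₂ : ℕ) : ℤ) ∣ (b' : ℤ) - b := by
      rw [← hordd]; exact orderOf_dvd_iff_zpow_eq_one.mpr hzero'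
    have ha1 : (a : ℤ) - a' = 0 := by
      apply Int.eq_zero_of_abs_lt_dvd hdvd1
      rw [abs_lt]
      constructor <;> omega
    have hb1 : (b' : ℤ) - b = 0 := by
      apply Int.eq_zero_of_abs_lt_dvd hdvd2
      rw [abs_lt]
      constructor <;> omega
    have : a = a' := by omega
    have : b = b' := by omega
    simp_all
  have hsub : ((Finset.range n₁ ×ˢ Finset.range n₂).image
      (fun p : ℕ × ℕ => c ^ p.1 * d ^ p.2)) ⊆ C := by
    intro g hg
    simp only [Finset.mem_image] at hg
    obtain ⟨⟨a, b⟩, _, rfl⟩ := hg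
    simp only [hC, Finset.mem_filter, Finset.mem_univ, true_and]
    exact (((Equiv.Perm.self_mem_cycle_factors_commute hcmem).pow_left a).mul_left
      ((Equiv.Perm.self_mem_cycle_factors_commute hdmem).pow_left b)).eq
  calc σ.cycleType.prod = n₁ * n₂ := hprod
    _ = ((Finset.range n₁ ×ˢ Finset.range n₂).image
        (fun p : ℕ × ℕ => c ^ p.1 * d ^ p.2)).card := by
        rw [Finset.card_image_of_injOn hinj, Finset.card_product, Finset.card_range,
          Finset.card_range]
    _ ≤ C.card := Finset.card_le_card hsub

/-- Counting permutations of a given cycle type with at most two cycles. -/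
lemma aux_type_count (t : Multiset ℕ) (ht : Multiset.card t ≤ 2) :
    t.prod * (univ.filter (fun σ : Equiv.Perm α => σ.cycleType = t)).card ≤
      (Fintype.card α) ! := by
  classical
  set T := univ.filter (fun σ : Equiv.Perm α => σ.cycleType = t) with hT
  rcases T.eq_empty_or_nonempty with hTe | ⟨σ₀, hσ₀⟩
  · simp [hTe]
  have hσ₀t : σ₀.cycleType = t := (Finset.mem_filter.mp hσ₀).2
  have key := Finset.card_nsmul_le_card_nsmul'
    (r := fun (g : Equiv.Perm α) (σ : Equiv.Perm α) => g * σ₀ * g⁻¹ = σ)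
    (s := (univ : Finset (Equiv.Perm α))) (t := T) (m := 1) (n := t.prod)
    ?_ ?_
  · simp only [smul_eq_mul, mul_one] at key
    calc t.prod * T.card = T.card * t.prod := mul_comm _ _
      _ ≤ (univ : Finset (Equiv.Perm α)).card := key
      _ = (Fintype.card α) ! := by rw [Finset.card_univ, Fintype.card_perm]
  · -- each fiber has at least t.prod elements
    intro σ hσT
    have hσt : σ.cycleType = t := (Finset.mem_filter.mp hσT).2
    have hconj : IsConj σ₀ σ :=
      Equiv.Perm.isConj_of_cycleType_eq (by rw [hσ₀t, hσt])
    obtain ⟨g₀, hg₀⟩ := isConj_iff.mp hconj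
    have hcent := aux_cent_card_ge σ₀ (by rw [hσ₀t]; exact ht)
    rw [← hσ₀t]
    calc σ₀.cycleType.prod
        ≤ (univ.filter (fun g : Equiv.Perm α => g * σ₀ = σ₀ * g)).card := hcent
      _ ≤ ((univ : Finset (Equiv.Perm α)).bipartiteBelow
            (fun g σ' => g * σ₀ * g⁻¹ = σ') σ).card := by
          apply Finset.card_le_card_of_injOn (fun h => g₀ * h)
          · intro h hh
            simp only [Finset.mem_coe, Finset.mem_filter, Finset.mem_univ, true_and] at hh
            simp only [Finset.mem_coe, Finset.mem_bipartiteBelow, Finset.mem_univ, true_and]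
            have hcomm : h * σ₀ * h⁻¹ = σ₀ := by
              rw [hh, mul_assoc]; simp
            calc g₀ * h * σ₀ * (g₀ * h)⁻¹ = g₀ * (h * σ₀ * h⁻¹) * g₀⁻¹ := by
                  simp [mul_assoc]
              _ = g₀ * σ₀ * g₀⁻¹ := by rw [hcomm]
              _ = σ := hg₀
          · intro x _ y _ hxy
            exact mul_left_cancel hxy
  · -- each g hits at most one element of T
    intro g _
    apply Finset.card_le_one.mpr
    intro x hx y hy
    simp only [Finset.mem_bipartiteAbove] at hx hy
    rw [← hx.2, ← hy.2]

end Aux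

/-- Classification of even permutations of `Fin m` with at most two cycles. -/
lemma aux_classify (m : ℕ) (hm : 5 ≤ m) (σ : Equiv.Perm (Fin m))
    (hsign : Equiv.Perm.sign σ = 1)
    (hle : Multiset.card σ.cycleType + (m - σ.support.card) ≤ 2) :
    (Odd m ∧ σ.cycleType = {m}) ∨
      (Even m ∧ ∃ i, 1 ≤ i ∧ 2 * i ≤ m ∧
        σ.cycleType = if i = 1 then {m - 1} else {i, m - i}) := by
  classical
  have hsum : σ.cycleType.sum = σ.support.card := Equiv.Perm.sum_cycleType σ
  have hsuppm : σ.support.card ≤ m := by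
    simpa using Finset.card_le_univ σ.support
  have hparity : Even (σ.cycleType.sum + Multiset.card σ.cycleType) := by
    have h := Equiv.Perm.sign_of_cycleType σ
    rw [hsign] at h
    have := h.symm
    rwa [neg_one_pow_eq_one_iff_even (by decide : (-1 : ℤˣ) ≠ 1)] at this
  by_cases h0 : Multiset.card σ.cycleType = 0
  · exfalso
    have hσ1 : σ = 1 := Equiv.Perm.card_cycleType_eq_zero.mp h0
    rw [hσ1] at hle
    simp only [Equiv.Perm.cycleType_one, Equiv.Perm.support_one] at hle h0
    simp at hle
    omega
  by_cases h1 : Multiset.card σ.cycleType = 1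
  · have hc : σ.IsCycle := Equiv.Perm.card_cycleType_eq_one.mp h1
    have htype : σ.cycleType = {σ.support.card} := by
      rw [hc.cycleType]
    set s := σ.support.card with hs
    have hsums : σ.cycleType.sum = s := hsum
    have hpar : Even (s + 1) := by rwa [hsums, h1] at hparity
    have hodd : ¬ Even s := by
      rcases Nat.even_or_odd s with he | ho
      · exfalso; rcases hpar with ⟨k, hk⟩; rcases he with ⟨j, hj⟩; omega
      · exact (Nat.not_even_iff_odd.mpr ho)
    have hsge : m - 1 ≤ s := by omega
    rcases Nat.lt_or_ge s m with hlt | hge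
    · -- s = m - 1, m even
      have hsm : s = m - 1 := by omega
      right
      have hmeven : Even m := by
        rcases Nat.even_or_odd m with he | ho
        · exact he
        · exfalso; apply hodd
          rcases ho with ⟨k, hk⟩
          exact ⟨k, by omega⟩
      exact ⟨hmeven, 1, le_refl 1, by omega, by rw [if_pos rfl, htype, hsm]⟩
    · -- s = m, m odd
      have hsm : s = m := by omega
      left
      constructor
      · rcases Nat.even_or_odd m with he | ho
        · exfalso; apply hodd; rw [hsm]; exact he
        · exact ho
      · rw [htype, hsm]
  -- two cycles
  have h2 : Multiset.card σ.cycleType = 2 := by omega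
  have hsm : σ.support.card = m := by omega
  obtain ⟨a, b, hab⟩ := Multiset.card_eq_two.mp h2
  have hsumab : a + b = m := by
    have := hsum
    rw [hab] at this
    simpa [hsm] using this
  have ha2 : 2 ≤ a := Equiv.Perm.two_le_of_mem_cycleType (by rw [hab]; simp)
  have hb2 : 2 ≤ b := Equiv.Perm.two_le_of_mem_cycleType (by rw [hab]; simp)
  have hmeven : Even m := by
    have hpar : Even (m + 2) := by rwa [hsum, hsm, h2] at hparity
    rcases hpar with ⟨k, hk⟩
    exact ⟨k - 1, by omega⟩
  right
  rcases le_or_gt a b with hab' | hab'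
  · refine ⟨hmeven, a, by omega, by omega, ?_⟩
    rw [if_neg (by omega), hab]
    have hbv : m - a = b := by omega
    rw [hbv]
  · refine ⟨hmeven, b, by omega, by omega, ?_⟩
    rw [if_neg (by omega), hab]
    have hav : m - b = a := by omega
    rw [hav]
    exact Multiset.cons_swap a b 0
  
/-- The harmonic-type sum bound for the even case. -/
lemma aux_sum_bound (m h : ℕ) (hmh : m = 2 * h) (hh : 3 ≤ h) :
    ∑ i ∈ Icc 1 h, (1 : ℝ) / ((i * (m - i) : ℕ) : ℝ) ≤ (1 + Real.log m) / m := by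
  have hm6 : 6 ≤ m := by omega
  have hmpos : (0 : ℝ) < m := by positivity
  -- pointwise partial fractions
  have hterm : ∀ i ∈ Icc 1 h, (1 : ℝ) / ((i * (m - i) : ℕ) : ℝ)
      = (1 / m) * ((1 : ℝ) / i + 1 / ((m - i : ℕ) : ℝ)) := by
    intro i hi
    simp only [Finset.mem_Icc] at hi
    have h1 : 1 ≤ i := hi.1
    have h2 : i ≤ h := hi.2
    have him : i < m := by omega
    have hipos : (0 : ℝ) < i := by exact_mod_cast h1
    have hmipos : (0 : ℝ) < ((m - i : ℕ) : ℝ) := by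
      have : 1 ≤ m - i := by omega
      exact_mod_cast this
    have hcast : ((i * (m - i) : ℕ) : ℝ) = (i : ℝ) * ((m - i : ℕ) : ℝ) := by push_cast; ring
    have hsum : (i : ℝ) + ((m - i : ℕ) : ℝ) = m := by
      have : i + (m - i) = m := by omega
      exact_mod_cast this
    rw [hcast]
    field_simp
    nlinarith [hsum]
  rw [Finset.sum_congr rfl hterm, ← Finset.mul_sum, Finset.sum_add_distrib]
  -- reindex the second part
  have hreindex : ∑ i ∈ Icc 1 h, (1 : ℝ) / ((m - i : ℕ) : ℝ)
      = ∑ j ∈ Icc h (m - 1), (1 : ℝ) / (j : ℝ) := by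
    apply Finset.sum_nbij' (fun i => m - i) (fun j => m - j)
    · intro i hi; simp only [Finset.mem_Icc] at hi ⊢; omega
    · intro j hj; simp only [Finset.mem_Icc] at hj ⊢; omega
    · intro i hi; simp only [Finset.mem_Icc] at hi; omega
    · intro j hj; simp only [Finset.mem_Icc] at hj; omega
    · intro i _; rfl
  rw [hreindex]
  -- combine the two sums into the harmonic number H_{m-1} plus 1/h
  have hsplit : ∑ i ∈ Icc 1 h, (1 : ℝ) / (i : ℝ)
      = (∑ i ∈ Icc 1 (h - 1), (1 : ℝ) / (i : ℝ)) + 1 / (h : ℝ) := by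
    have : h = (h - 1) + 1 := by omega
    rw [this]
    rw [Finset.sum_Icc_succ_top (by omega)]
    congr 2 <;> omega
  have hIoc1 : Icc 1 (h - 1) = Ioc 0 (h - 1) := by
    rw [← Finset.Icc_add_one_left_eq_Ioc]
    rfl
  have hIoc2 : Icc h (m - 1) = Ioc (h - 1) (m - 1) := by
    rw [← Finset.Icc_add_one_left_eq_Ioc]
    congr 1
    omega
  have hconsec : (∑ i ∈ Ioc 0 (h - 1), (1 : ℝ) / (i : ℝ))
      + ∑ j ∈ Ioc (h - 1) (m - 1), (1 : ℝ) / (j : ℝ)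
      = ∑ i ∈ Ioc 0 (m - 1), (1 : ℝ) / (i : ℝ) :=
    Finset.sum_Ioc_consecutive _ (by omega) (by omega)
  have hIoc3 : Ioc 0 (m - 1) = Icc 1 (m - 1) := by
    ext x; simp only [Finset.mem_Ioc, Finset.mem_Icc]; omega
  have hharm : ∑ i ∈ Ioc 0 (m - 1), (1 : ℝ) / (i : ℝ) = (harmonic (m - 1) : ℝ) := by
    rw [hIoc3, harmonic_eq_sum_Icc]
    push_cast
    apply Finset.sum_congr rfl
    intro i _
    rw [one_div]
  -- the harmonic bound
  have hHbound : (harmonic (m - 1) : ℝ) + 1 / (h : ℝ) ≤ 1 + Real.log m := by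
    have hhpos : (0 : ℝ) < h := by positivity
    rcases Nat.lt_or_ge h 4 with hlt | hge
    · -- h = 3, m = 6
      have h3 : h = 3 := by omega
      have hm6' : m = 6 := by omega
      subst h3; subst hmh
      norm_num
      have h6 := Real.eulerMascheroniSeq'_six_lt_two_thirds
      rw [Real.eulerMascheroniSeq'] at h6
      norm_num at h6
      linarith
    · -- h ≥ 4, m - 1 ≥ 7
      have hm8 : 8 ≤ m := by omega
      have h6lt : Real.eulerMascheroniSeq' (m - 1) < Real.eulerMascheroniSeq' 6 :=
        Real.strictAnti_eulerMascheroniSeq' (by omega)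
      have h6v : Real.eulerMascheroniSeq' 6 < 2 / 3 := Real.eulerMascheroniSeq'_six_lt_two_thirds
      have hm1v : Real.eulerMascheroniSeq' (m - 1)
          = (harmonic (m - 1) : ℝ) - Real.log (m - 1 : ℕ) := by
        rw [Real.eulerMascheroniSeq', if_neg (by omega)]
      have hm1posR : (0 : ℝ) < ((m - 1 : ℕ) : ℝ) := by
        have : (0 : ℕ) < m - 1 := by omega
        exact_mod_cast this
      have hlogmono : Real.log ((m - 1 : ℕ) : ℝ) ≤ Real.log m := by
        apply Real.log_le_log hm1posR
        have : (m - 1 : ℕ) ≤ m := by omega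
        exact_mod_cast this
      have hinvh : 1 / (h : ℝ) ≤ 1 / 3 := by
        apply div_le_div_of_nonneg_left one_pos.le (by norm_num)
        exact_mod_cast hh
      have := hm1v ▸ (h6lt.trans h6v)
      linarith
  calc (1 / (m : ℝ)) * ((∑ i ∈ Icc 1 h, (1 : ℝ) / (i : ℝ))
        + ∑ j ∈ Icc h (m - 1), (1 : ℝ) / (j : ℝ))
      = (1 / (m : ℝ)) * ((harmonic (m - 1) : ℝ) + 1 / (h : ℝ)) := by
        rw [hsplit, hIoc1, hIoc2]
        rw [add_right_comm, hconsec, hharm]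
    _ ≤ (1 / (m : ℝ)) * (1 + Real.log m) := by
        apply mul_le_mul_of_nonneg_left hHbound (by positivity)
    _ = (1 + Real.log m) / m := by ring

/-- the proportion of elements of the alternating group `A_m` (`m ≥ 5`)
having at most two cycles (counting fixed points as cycles of length 1) is at most
`2(1 + log m)/m`. -/
theorem stmt_12 (m : ℕ) (hm : 5 ≤ m) :
    ((univ.filter (fun σ : alternatingGroup (Fin m) =>
        (σ : Equiv.Perm (Fin m)).cycleType.card
          + (m - (σ : Equiv.Perm (Fin m)).support.card) ≤ 2)).card : ℝ) /
      (Fintype.card (alternatingGroup (Fin m))) ≤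
      2 * (1 + Real.log m) / m := by
  classical
  haveI : Nontrivial (Fin m) := by
    apply Fin.nontrivial_iff_two_le.mpr
    omega
  have hmpos : (0 : ℝ) < m := by positivity
  set T : Finset (Equiv.Perm (Fin m)) := univ.filter
    (fun σ : Equiv.Perm (Fin m) => Equiv.Perm.sign σ = 1 ∧
      Multiset.card σ.cycleType + (m - σ.support.card) ≤ 2) with hT
  -- the subgroup filter and the permutation filter have the same cardinality
  have hST : (univ.filter (fun σ : alternatingGroup (Fin m) =>
      (σ : Equiv.Perm (Fin m)).cycleType.card
        + (m - (σ : Equiv.Perm (Fin m)).support.card) ≤ 2)).card = T.card := by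
    refine Finset.card_bij (fun σ _ => (σ : Equiv.Perm (Fin m))) ?_ ?_ ?_
    · intro σ hσ
      simp only [Finset.mem_filter, Finset.mem_univ, true_and] at hσ
      simp only [hT, Finset.mem_filter, Finset.mem_univ, true_and]
      exact ⟨Equiv.Perm.mem_alternatingGroup.mp σ.2, hσ⟩
    · intro x _ y _ hxy
      exact Subtype.ext hxy
    · intro σ hσ
      simp only [hT, Finset.mem_filter, Finset.mem_univ, true_and] at hσ
      have hmemA : σ ∈ alternatingGroup (Fin m) := Equiv.Perm.mem_alternatingGroup.mpr hσ.1
      have hmemS : (⟨σ, hmemA⟩ : alternatingGroup (Fin m)) ∈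
          univ.filter (fun τ : alternatingGroup (Fin m) =>
            (τ : Equiv.Perm (Fin m)).cycleType.card
              + (m - (τ : Equiv.Perm (Fin m)).support.card) ≤ 2) := by
        simp only [Finset.mem_filter, Finset.mem_univ, true_and]
        exact hσ.2
      exact ⟨⟨σ, hmemA⟩, hmemS, rfl⟩
  -- cardinality of the alternating group
  have hA2 : 2 * Fintype.card (alternatingGroup (Fin m)) = m ! := by
    rw [two_mul_card_alternatingGroup, Fintype.card_perm, Fintype.card_fin]
  have hApos : (0 : ℝ) < (Fintype.card (alternatingGroup (Fin m)) : ℝ) := by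
    have : 0 < Fintype.card (alternatingGroup (Fin m)) := Fintype.card_pos
    exact_mod_cast this
  have hAval : (Fintype.card (alternatingGroup (Fin m)) : ℝ) = (m ! : ℝ) / 2 := by
    have : ((2 * Fintype.card (alternatingGroup (Fin m)) : ℕ) : ℝ) = ((m ! : ℕ) : ℝ) := by
      exact_mod_cast congrArg (Nat.cast : ℕ → ℝ) hA2
    push_cast at this
    linarith
  rw [hST, hAval]
  have hfacpos : (0 : ℝ) < (m ! : ℝ) := by
    exact_mod_cast Nat.factorial_pos m
  rw [div_le_div_iff₀ (by linarith) hmpos]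
  -- key bound : T.card * m ≤ (1 + log m) * m!
  have hkey : (T.card : ℝ) * m ≤ (1 + Real.log m) * (m !) := by
    rcases Nat.even_or_odd m with hmev | hmodd
    · -- even case
      obtain ⟨h, hh⟩ := hmev
      have hmh : m = 2 * h := by omega
      have hh3 : 3 ≤ h := by omega
      -- types
      set tpe : ℕ → Multiset ℕ := fun i => if i = 1 then {m - 1} else {i, m - i} with htpe
      have hcover : T ⊆ (Icc 1 h).biUnion
          (fun i => univ.filter (fun σ : Equiv.Perm (Fin m) => σ.cycleType = tpe i)) := by
        intro σ hσ
        simp only [hT, Finset.mem_filter, Finset.mem_univ, true_and] at hσ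
        rcases aux_classify m hm σ hσ.1 hσ.2 with ⟨hodd, _⟩ | ⟨_, i, hi1, hi2, htyp⟩
        · exfalso
          rcases hodd with ⟨k, hk⟩
          omega
        · simp only [Finset.mem_biUnion, Finset.mem_Icc, Finset.mem_filter, Finset.mem_univ,
            true_and]
          exact ⟨i, ⟨hi1, by omega⟩, htyp⟩
      have hcard_le : T.card ≤ ∑ i ∈ Icc 1 h,
          (univ.filter (fun σ : Equiv.Perm (Fin m) => σ.cycleType = tpe i)).card :=
        le_trans (Finset.card_le_card hcover) (Finset.card_biUnion_le)
      -- per-type bound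
      have hper : ∀ i ∈ Icc 1 h,
          ((univ.filter (fun σ : Equiv.Perm (Fin m) => σ.cycleType = tpe i)).card : ℝ)
            ≤ (m ! : ℝ) * ((1 : ℝ) / ((i * (m - i) : ℕ) : ℝ)) := by
        intro i hi
        simp only [Finset.mem_Icc] at hi
        have hi1 : 1 ≤ i := hi.1
        have hi2 : i ≤ h := hi.2
        have hKpos : 0 < i * (m - i) := by
          have : i < m := by omega
          have : 1 ≤ m - i := by omega
          exact Nat.mul_pos hi1 this
        have hprod : (tpe i).prod = i * (m - i) := by
          by_cases hone : i = 1
          · subst hone; simp [htpe]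
          · rw [htpe]; simp only [if_neg hone]
            simp [Multiset.prod_cons]
        have hcard2 : Multiset.card (tpe i) ≤ 2 := by
          by_cases hone : i = 1
          · subst hone; simp [htpe]
          · rw [htpe]; simp only [if_neg hone]
            simp
        have hcount := aux_type_count (α := Fin m) (tpe i) hcard2
        rw [Fintype.card_fin, hprod] at hcount
        have hKposR : (0 : ℝ) < ((i * (m - i) : ℕ) : ℝ) := by exact_mod_cast hKpos
        rw [mul_one_div, le_div_iff₀ hKposR]
        calc ((univ.filter (fun σ : Equiv.Perm (Fin m) => σ.cycleType = tpe i)).card : ℝ)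
              * ((i * (m - i) : ℕ) : ℝ)
            = (((i * (m - i)) *
              (univ.filter (fun σ : Equiv.Perm (Fin m) => σ.cycleType = tpe i)).card : ℕ) : ℝ) := by
              push_cast; ring
          _ ≤ (m ! : ℝ) := by exact_mod_cast hcount
      have hTR : (T.card : ℝ) ≤ (m ! : ℝ) * ((1 + Real.log m) / m) := by
        calc (T.card : ℝ)
            ≤ ∑ i ∈ Icc 1 h, ((univ.filter
                (fun σ : Equiv.Perm (Fin m) => σ.cycleType = tpe i)).card : ℝ) := by
              exact_mod_cast hcard_le
          _ ≤ ∑ i ∈ Icc 1 h, (m ! : ℝ) * ((1 : ℝ) / ((i * (m - i) : ℕ) : ℝ)) :=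
              Finset.sum_le_sum hper
          _ = (m ! : ℝ) * ∑ i ∈ Icc 1 h, (1 : ℝ) / ((i * (m - i) : ℕ) : ℝ) := by
              rw [Finset.mul_sum]
          _ ≤ (m ! : ℝ) * ((1 + Real.log m) / m) := by
              apply mul_le_mul_of_nonneg_left (aux_sum_bound m h hmh hh3) hfacpos.le
      calc (T.card : ℝ) * m ≤ ((m ! : ℝ) * ((1 + Real.log m) / m)) * m := by
            apply mul_le_mul_of_nonneg_right hTR hmpos.le
        _ = (1 + Real.log m) * (m !) := by field_simp
    · -- odd case
      have hsub : T ⊆ univ.filter (fun σ : Equiv.Perm (Fin m) => σ.cycleType = {m}) := by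
        intro σ hσ
        simp only [hT, Finset.mem_filter, Finset.mem_univ, true_and] at hσ
        rcases aux_classify m hm σ hσ.1 hσ.2 with ⟨_, htyp⟩ | ⟨hmev, _⟩
        · simp only [Finset.mem_filter, Finset.mem_univ, true_and]
          exact htyp
        · exfalso
          rcases hmodd with ⟨k, hk⟩
          rcases hmev with ⟨j, hj⟩
          omega
      have hcount := aux_type_count (α := Fin m) ({m} : Multiset ℕ) (by simp)
      rw [Fintype.card_fin] at hcount
      simp only [Multiset.prod_singleton] at hcount
      have hmn : m * T.card ≤ m ! :=
        le_trans (Nat.mul_le_mul_left m (Finset.card_le_card hsub)) hcount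
      have hlog : 0 ≤ Real.log m := Real.log_nonneg (by exact_mod_cast (by omega : 1 ≤ m))
      have : (T.card : ℝ) * m ≤ (m ! : ℝ) := by
        calc (T.card : ℝ) * m = ((m * T.card : ℕ) : ℝ) := by push_cast; ring
          _ ≤ (m ! : ℝ) := by exact_mod_cast hmn
      nlinarith
  calc (T.card : ℝ) * m ≤ (1 + Real.log m) * (m !) := hkey
    _ = 2 * (1 + Real.log m) * ((m ! : ℝ) / 2) := by ring
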